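/- Let W_n(x) be the n×n matrix with (i,j) entry x^{j−i}/(j−i)! for j ≥ i and 0 otherwise (the Wronskian matrix of 1, x, x²/2,..., x^{n−1}/(n−1)!). Then for each i-element subset I of columns, the minor of W_n(x) on rows {1,...,i} and columns I is a positive rational multiple of x^{ℓ(I)}, where ℓ(I) = Σ_k (a_k − k). -/

import Mathlib

open Polynomial

/-- The `n × n` unit Wronskian matrix `W_n(x)`, with `(i,j)` entry
`x^(j−i)/(j−i)!` for `j ≥ i` and `0` otherwise (the Wronskian matrix of
`1, x, x²/2, ..., x^(n−1)/(n−1)!`), as a matrix of polynomials over `ℚ`. -/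
noncomputable def unitWronskian (n : ℕ) : Matrix (Fin n) (Fin n) (Polynomial ℚ) :=
  fun p q => if p ≤ q then
    C (1 / ((q : ℕ) - (p : ℕ)).factorial : ℚ) * X ^ ((q : ℕ) - (p : ℕ)) else 0

lemma strictMono_fin_le {i n : ℕ} (a : Fin i → Fin n) (ha : StrictMono a) (k : Fin i) :
    (k : ℕ) ≤ (a k : ℕ) := by
  obtain ⟨m, hm⟩ := k
  induction m with
  | zero => exact Nat.zero_le _
  | succ m ih =>
    have h' : m < i := Nat.lt_of_succ_lt hm
    have h2 : (a ⟨m, h'⟩ : ℕ) < (a ⟨m + 1, hm⟩ : ℕ) := ha (by simp [Fin.lt_def])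
    have h3 := ih h'
    simp only [Fin.val_mk] at h3 ⊢
    omega

theorem unitWronskian_minor (n i : ℕ) (hin : i ≤ n)
    (a : Fin i → Fin n) (ha : StrictMono a) :
    ∃ c : ℚ, 0 < c ∧
      Matrix.det (fun p q : Fin i => unitWronskian n (Fin.castLE hin p) (a q))
        = C c * X ^ (∑ k : Fin i, ((a k : ℕ) - (k : ℕ))) := by
  classical
  set ℓ : ℕ := ∑ k : Fin i, ((a k : ℕ) - (k : ℕ)) with hℓ
  -- the rational coefficient matrix
  set B : Matrix (Fin i) (Fin i) ℚ := fun p q =>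
    if (p : ℕ) ≤ (a q : ℕ) then (1 / ((a q : ℕ) - (p : ℕ)).factorial : ℚ) else 0 with hB
  refine ⟨B.det, ?_, ?_⟩
  · -- positivity of det B
    set D : Matrix (Fin i) (Fin i) ℚ :=
      Matrix.of (fun p q : Fin i => (((a q : ℕ).descFactorial (p : ℕ) : ℚ))) with hDdef
    have hBfact : B = Matrix.of (fun p q : Fin i =>
        (1 / ((a q : ℕ).factorial : ℚ)) * D p q) := by
      ext p q
      simp only [hB, hDdef, Matrix.of_apply]
      by_cases h : (p : ℕ) ≤ (a q : ℕ)
      · rw [if_pos h]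
        have := Nat.factorial_mul_descFactorial h
        have hfac : (((a q : ℕ) - (p : ℕ)).factorial : ℚ) ≠ 0 := by
          exact_mod_cast Nat.factorial_ne_zero _
        have hfac2 : (((a q : ℕ)).factorial : ℚ) ≠ 0 := by
          exact_mod_cast Nat.factorial_ne_zero _
        field_simp
        exact_mod_cast this.symm
      · rw [if_neg h]
        have : (a q : ℕ).descFactorial (p : ℕ) = 0 :=
          Nat.descFactorial_eq_zero_iff_lt.2 (by omega)
        rw [this]; simp
    rw [hBfact, Matrix.det_mul_row]
    have hD : Matrix.det D =
        Matrix.det (Matrix.vandermonde (fun q : Fin i => ((a q : ℕ) : ℚ))) := by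
      rw [Matrix.det_eval_matrixOfPolynomials_eq_det_vandermonde
        (fun q : Fin i => ((a q : ℕ) : ℚ)) (fun p => descPochhammer ℚ (p : ℕ))
        (fun p => descPochhammer_natDegree ℚ (p : ℕ))
        (fun p => monic_descPochhammer ℚ (p : ℕ)), ← Matrix.det_transpose]
      congr 1
      ext p q
      simp [hDdef, Matrix.transpose_apply, descPochhammer_eval_eq_descFactorial]
    rw [hD, Matrix.det_vandermonde]
    apply mul_pos
    · apply Finset.prod_pos
      intro p _
      positivity
    · apply Finset.prod_pos
      intro p _
      apply Finset.prod_pos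
      intro q hq
      have : p < q := Finset.mem_Ioi.1 hq
      have : (a p : ℕ) < (a q : ℕ) := ha this
      have : ((a p : ℕ) : ℚ) < ((a q : ℕ) : ℚ) := by exact_mod_cast this
      linarith
  · -- the determinant identity
    rw [Matrix.det_apply]; erw [Matrix.det_apply]; rw [map_sum, Finset.sum_mul]
    refine Finset.sum_congr rfl (fun σ _ => ?_)
    have key : (∏ q : Fin i, unitWronskian n (Fin.castLE hin (σ q)) (a q))
        = C (∏ q : Fin i, B (σ q) q) * X ^ ℓ := by
      by_cases hall : ∀ q : Fin i, (σ q : ℕ) ≤ (a q : ℕ)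
      · have hprod : ∀ q : Fin i,
            unitWronskian n (Fin.castLE hin (σ q)) (a q)
              = C (1 / (((a q : ℕ) - (σ q : ℕ)).factorial : ℚ)) * X ^ ((a q : ℕ) - (σ q : ℕ)) := by
          intro q
          rw [unitWronskian, if_pos (by simpa [Fin.le_def] using hall q)]
          simp [Fin.coe_castLE]
        have hBval : ∀ q : Fin i, B (σ q) q = 1 / (((a q : ℕ) - (σ q : ℕ)).factorial : ℚ) := by
          intro q; rw [hB]; exact if_pos (hall q)
        calc ∏ q : Fin i, unitWronskian n (Fin.castLE hin (σ q)) (a q)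
            = ∏ q : Fin i, (C (1 / (((a q : ℕ) - (σ q : ℕ)).factorial : ℚ))
                * X ^ ((a q : ℕ) - (σ q : ℕ))) := by
              exact Finset.prod_congr rfl (fun q _ => hprod q)
          _ = C (∏ q : Fin i, (1 / (((a q : ℕ) - (σ q : ℕ)).factorial : ℚ)))
                * X ^ (∑ q : Fin i, ((a q : ℕ) - (σ q : ℕ))) := by
              rw [Finset.prod_mul_distrib, map_prod, Finset.prod_pow_eq_pow_sum]
          _ = C (∏ q : Fin i, B (σ q) q) * X ^ ℓ := by
              congr 1
              · exact congrArg C (Finset.prod_congr rfl (fun q _ => (hBval q).symm))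
              · congr 1
                rw [Finset.sum_tsub_distrib _ (fun q _ => hall q), hℓ,
                  Finset.sum_tsub_distrib _ (fun q _ => strictMono_fin_le a ha q)]
                congr 1
                exact Equiv.sum_comp σ (fun q : Fin i => (q : ℕ))
      · push_neg at hall
        obtain ⟨q, hq⟩ := hall
        have h1 : unitWronskian n (Fin.castLE hin (σ q)) (a q) = 0 := by
          rw [unitWronskian, if_neg]
          simpa [Fin.le_def] using hq.not_ge
        have h2 : B (σ q) q = 0 := by
          rw [hB]; exact if_neg (by omega)
        have h2' : (∏ q : Fin i, B (σ q) q) = 0 :=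
          Finset.prod_eq_zero (Finset.mem_univ q) h2
        rw [Finset.prod_eq_zero (Finset.mem_univ q) h1, h2']
        simp
    rw [key, Units.smul_def, Units.smul_def, zsmul_eq_mul, zsmul_eq_mul,
      map_mul, map_intCast]
    ring
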